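/- For any r ∈ (1, 2], the function ψ_r(w) = (1/(2(r−1)))‖w‖_r² on ℝ^d is 2-uniformly convex with respect to the ℓ_r norm, i.e., for all w, w' and α ∈ [0,1]: ψ_r(αw + (1−α)w') ≤ αψ_r(w) + (1−α)ψ_r(w') − (α(1−α)/2)‖w − w'‖_r². -/

import Mathlib

open Finset

/-- The ℓ_r norm on ℝ^d : `‖w‖_r = (∑ i, |w i| ^ r) ^ (1/r)`. -/
noncomputable def lpNorm (r : ℝ) {d : ℕ} (w : Fin d → ℝ) : ℝ :=
  (∑ i, |w i| ^ r) ^ (1 / r)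

namespace BCLaux

open Real Set Filter Topology

theorem key_aux {s : ℝ} (hs0 : 0 < s) (hs1 : s ≤ 1) {t : ℝ} (ht0 : 0 ≤ t) (ht1 : t < 1) :
    (1 - t) ^ s * (1 + s * t) ≤ (1 + t) ^ s * (1 - s * t) := by
  set k : ℝ → ℝ := fun t => (1 + t) ^ s * (1 - s * t) - (1 - t) ^ s * (1 + s * t) with hk
  have hderiv : ∀ t ∈ Ioo (0:ℝ) 1, HasDerivAt k
      (s * (1+s) * t * ((1 - t) ^ (s-1) - (1 + t) ^ (s-1))) t := by
    intro t ht
    obtain ⟨ht0', ht1'⟩ := ht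
    have h1 : (0:ℝ) < 1 + t := by linarith
    have h2 : (0:ℝ) < 1 - t := by linarith
    have d1 : HasDerivAt (fun t : ℝ => (1 + t) ^ s) (s * (1+t) ^ (s-1)) t := by
      have := (Real.hasDerivAt_rpow_const (x := 1 + t) (p := s) (Or.inl h1.ne')).comp t
        ((hasDerivAt_id t).const_add 1)
      exact this.congr_deriv (by simp)
    have d2 : HasDerivAt (fun t : ℝ => (1 - t) ^ s) (-(s * (1-t) ^ (s-1))) t := by
      have := (Real.hasDerivAt_rpow_const (x := 1 - t) (p := s) (Or.inl h2.ne')).comp t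
        ((hasDerivAt_id t).neg.const_add 1)
      refine this.congr_deriv ?_
      ring
    have d3 : HasDerivAt (fun t : ℝ => 1 - s * t) (-s) t := by
      exact (((hasDerivAt_id t).const_mul s).const_sub 1).congr_deriv (by simp)
    have d4 : HasDerivAt (fun t : ℝ => 1 + s * t) s t := by
      simpa using ((hasDerivAt_id t).const_mul s).const_add 1
    have hcomb := (d1.mul d3).sub (d2.mul d4)
    refine hcomb.congr_deriv ?_
    have e1 : (1 + t) ^ s = (1 + t) ^ (s-1) * (1 + t) := by
      rw [← Real.rpow_add_one h1.ne']; ring_nf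
    have e2 : (1 - t) ^ s = (1 - t) ^ (s-1) * (1 - t) := by
      rw [← Real.rpow_add_one h2.ne']; ring_nf
    rw [e1, e2]; ring
  have mono : MonotoneOn k (Ico (0:ℝ) 1) := by
    apply monotoneOn_of_deriv_nonneg (convex_Ico 0 1)
    · apply Continuous.continuousOn
      apply Continuous.sub
      · exact ((continuous_const.add continuous_id).rpow_const (fun x => Or.inr hs0.le)).mul
          (continuous_const.sub (continuous_const.mul continuous_id))
      · exact ((continuous_const.sub continuous_id).rpow_const (fun x => Or.inr hs0.le)).mul
          (continuous_const.add (continuous_const.mul continuous_id))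
    · intro x hx
      rw [interior_Ico] at hx
      exact ((hderiv x hx).differentiableAt).differentiableWithinAt
    · intro x hx
      rw [interior_Ico] at hx
      rw [(hderiv x hx).deriv]
      have h2 : (0:ℝ) < 1 - x := by linarith [hx.2]
      have h1 : (0:ℝ) < 1 + x := by linarith [hx.1]
      have hle : (1 + x) ^ (s-1) ≤ (1 - x) ^ (s-1) :=
        Real.rpow_le_rpow_of_nonpos h2 (by linarith [hx.1]) (by linarith)
      have hx0 : 0 ≤ x := hx.1.le
      have : 0 ≤ s * (1+s) * x := by positivity
      nlinarith [mul_nonneg this (sub_nonneg.2 hle)]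
  have h0 : k 0 = 0 := by simp [hk]
  have hmono := mono (show (0:ℝ) ∈ Ico (0:ℝ) 1 by constructor <;> norm_num) ⟨ht0, ht1⟩ ht0
  rw [h0] at hmono
  simp only [hk] at hmono
  linarith

theorem core_ineq {p : ℝ} (hp1 : 1 < p) (hp2 : p ≤ 2) {t : ℝ} (ht0 : 0 ≤ t) (ht1 : t ≤ 1) :
    (1 + (p - 1) * t ^ 2) ^ (p / 2) ≤ ((1 + t) ^ p + (1 - t) ^ p) / 2 := by
  have hp0 : (0:ℝ) < p := by linarith
  have main : ∀ t : ℝ, 0 ≤ t → t < 1 →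
      (1 + (p - 1) * t ^ 2) ^ (p / 2) ≤ ((1 + t) ^ p + (1 - t) ^ p) / 2 := by
    intro t ht0 ht1
    set φ : ℝ → ℝ := fun t => ((1 + t) ^ p + (1 - t) ^ p) / 2 with hφ
    set g : ℝ → ℝ := fun t => 1 + (p - 1) * t ^ 2 with hg
    have hφpos : ∀ u ∈ Ico (0:ℝ) 1, 0 < φ u := by
      intro u hu
      have h1 : (0:ℝ) < 1 + u := by linarith [hu.1]
      have h2 : (0:ℝ) ≤ 1 - u := by linarith [hu.2]
      have := Real.rpow_pos_of_pos h1 p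
      have := Real.rpow_nonneg h2 p
      simp only [hφ]
      positivity
    have hgpos : ∀ u : ℝ, 0 < g u := by
      intro u
      have : 0 ≤ (p - 1) * u ^ 2 := by nlinarith
      simp only [hg]; linarith
    set F : ℝ → ℝ := fun t => Real.log (φ t) - (p / 2) * Real.log (g t) with hF
    have hderiv : ∀ x ∈ Ioo (0:ℝ) 1, HasDerivAt F
        (((p * (1 + x) ^ (p-1) - p * (1 - x) ^ (p-1)) / 2) / φ x
          - (p / 2) * (((p - 1) * (2 * x)) / g x)) x := by
      intro x hx
      have h1 : (0:ℝ) < 1 + x := by linarith [hx.1]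
      have h2 : (0:ℝ) < 1 - x := by linarith [hx.2]
      have d1 : HasDerivAt (fun t : ℝ => (1 + t) ^ p) (p * (1 + x) ^ (p-1)) x := by
        have := (Real.hasDerivAt_rpow_const (x := 1 + x) (p := p) (Or.inl h1.ne')).comp x
          ((hasDerivAt_id x).const_add 1)
        exact this.congr_deriv (by simp)
      have d2 : HasDerivAt (fun t : ℝ => (1 - t) ^ p) (-(p * (1 - x) ^ (p-1))) x := by
        have := (Real.hasDerivAt_rpow_const (x := 1 - x) (p := p) (Or.inl h2.ne')).comp x
          ((hasDerivAt_id x).neg.const_add 1)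
        refine this.congr_deriv ?_
        ring
      have dφ : HasDerivAt φ ((p * (1 + x) ^ (p-1) - p * (1 - x) ^ (p-1)) / 2) x := by
        have := (d1.add d2).div_const 2
        refine this.congr_deriv (by ring)
      have dg : HasDerivAt g ((p - 1) * (2 * x)) x := by
        have : HasDerivAt (fun t : ℝ => t ^ 2) (2 * x) x := by
          simpa using hasDerivAt_pow 2 x
        exact (this.const_mul (p - 1)).const_add 1
      exact (dφ.log (hφpos x ⟨hx.1.le, hx.2⟩).ne').sub
        ((dg.log (hgpos x).ne').const_mul (p / 2))
    have mono : MonotoneOn F (Ico (0:ℝ) 1) := by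
      apply monotoneOn_of_deriv_nonneg (convex_Ico 0 1)
      · apply ContinuousOn.sub
        · apply ContinuousOn.log
          · apply Continuous.continuousOn
            exact (((continuous_const.add continuous_id).rpow_const
              (fun x => Or.inr hp0.le)).add ((continuous_const.sub continuous_id).rpow_const
              (fun x => Or.inr hp0.le))).div_const 2
          · exact fun u hu => (hφpos u hu).ne'
        · apply ContinuousOn.const_smul ?_ (p / 2)
          apply ContinuousOn.log
          · exact (continuous_const.add (continuous_const.mul (continuous_pow 2))).continuousOn
          · exact fun u _ => (hgpos u).ne'
      · intro x hx
        rw [interior_Ico] at hx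
        exact ((hderiv x hx).differentiableAt).differentiableWithinAt
      · intro x hx
        rw [interior_Ico] at hx
        rw [(hderiv x hx).deriv]
        have h1 : (0:ℝ) < 1 + x := by linarith [hx.1]
        have h2 : (0:ℝ) < 1 - x := by linarith [hx.2]
        set A := (1 + x) ^ (p-1) with hA
        set B := (1 - x) ^ (p-1) with hB
        have hkey : B * (1 + (p-1) * x) ≤ A * (1 - (p-1) * x) :=
          key_aux (by linarith) (by linarith) hx.1.le hx.2
        have hφx : φ x = (A * (1 + x) + B * (1 - x)) / 2 := by
          have e1 : (1 + x) ^ p = A * (1 + x) := by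
            rw [hA, ← Real.rpow_add_one h1.ne']; ring_nf
          have e2 : (1 - x) ^ p = B * (1 - x) := by
            rw [hB, ← Real.rpow_add_one h2.ne']; ring_nf
          simp only [hφ, e1, e2]
        have hφp := hφpos x ⟨hx.1.le, hx.2⟩
        have hgp := hgpos x
        rw [sub_nonneg, ← mul_div_assoc, div_le_div_iff₀ (hgp) (hφp)]
        rw [hφx]
        have hgx : g x = 1 + (p - 1) * x ^ 2 := rfl
        rw [hgx]
        have hAB : 0 ≤ A := Real.rpow_nonneg h1.le _
        have hBB : 0 ≤ B := Real.rpow_nonneg h2.le _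
        nlinarith [hkey, hx.1.le, mul_nonneg hAB hx.1.le, mul_nonneg hBB hx.1.le,
          mul_le_mul_of_nonneg_left hkey (mul_nonneg hp0.le hx.1.le)]
      all_goals skip
    have hF0 : F 0 = 0 := by
      simp only [hF, hφ, hg]
      norm_num
    have hFt : 0 ≤ F t := by
      have := mono (show (0:ℝ) ∈ Ico (0:ℝ) 1 by constructor <;> norm_num) ⟨ht0, ht1⟩ ht0
      rw [hF0] at this
      exact this
    have hgp := hgpos t
    have hφp := hφpos t ⟨ht0, ht1⟩
    have : g t ^ (p / 2) ≤ φ t := by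
      rw [Real.rpow_def_of_pos hgp]
      calc Real.exp (Real.log (g t) * (p / 2)) ≤ Real.exp (Real.log (φ t)) := by
            apply Real.exp_le_exp.2
            have : (p / 2) * Real.log (g t) ≤ Real.log (φ t) := by
              simp only [hF] at hFt; linarith
            linarith [this]
        _ = φ t := Real.exp_log hφp
    exact this
  rcases lt_or_eq_of_le ht1 with h | h
  · exact main t ht0 h
  · subst h
    set D : ℝ → ℝ := fun t => ((1 + t) ^ p + (1 - t) ^ p) / 2 - (1 + (p - 1) * t ^ 2) ^ (p / 2)
      with hD
    have hDcont : Continuous D := by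
      apply Continuous.sub
      · exact (((continuous_const.add continuous_id).rpow_const
          (fun x => Or.inr hp0.le)).add ((continuous_const.sub continuous_id).rpow_const
          (fun x => Or.inr hp0.le))).div_const 2
      · exact (continuous_const.add (continuous_const.mul (continuous_pow 2))).rpow_const
          (fun x => Or.inr (by linarith))
    have hlim : Tendsto D (𝓝[<] (1:ℝ)) (𝓝 (D 1)) :=
      (hDcont.tendsto 1).mono_left nhdsWithin_le_nhds
    have hev : ∀ᶠ x in 𝓝[<] (1:ℝ), 0 ≤ D x := by
      have h0 : ∀ᶠ x in 𝓝[<] (1:ℝ), 0 < x :=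
        eventually_nhdsWithin_of_eventually_nhds (eventually_gt_nhds zero_lt_one)
      have h1 : ∀ᶠ x in 𝓝[<] (1:ℝ), x < 1 := eventually_mem_nhdsWithin
      filter_upwards [h0, h1] with x hx0 hx1
      have := main x hx0.le hx1
      simp only [hD]
      linarith
    have : 0 ≤ D 1 := ge_of_tendsto hlim hev
    simp only [hD] at this
    linarith

theorem scalar_ord {p : ℝ} (hp1 : 1 < p) (hp2 : p ≤ 2) {a b : ℝ} (hb : 0 ≤ b) (hba : b ≤ a) :
    (a ^ 2 + (p - 1) * b ^ 2) ^ (p / 2) ≤ ((a + b) ^ p + (a - b) ^ p) / 2 := by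
  have hp0 : (0:ℝ) < p := by linarith
  have ha : 0 ≤ a := le_trans hb hba
  rcases eq_or_lt_of_le ha with h | h
  · have hb0 : b = 0 := le_antisymm (h ▸ hba) hb
    have e : (0:ℝ) ^ 2 + (p - 1) * (0:ℝ) ^ 2 = 0 := by ring
    rw [← h, hb0, e, Real.zero_rpow (show p / 2 ≠ 0 by positivity)]
    have e2 : ((0:ℝ) + 0) = 0 := by ring
    have e3 : ((0:ℝ) - 0) = 0 := by ring
    rw [e2, e3, Real.zero_rpow hp0.ne']
    norm_num
  · set t := b / a with htdef
    have ht0 : 0 ≤ t := div_nonneg hb h.le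
    have ht1 : t ≤ 1 := (div_le_one h).2 hba
    have hcore := core_ineq hp1 hp2 ht0 ht1
    have hap : (0:ℝ) < a ^ p := Real.rpow_pos_of_pos h p
    have key := mul_le_mul_of_nonneg_left hcore hap.le
    have e0 : a ^ p = (a ^ 2) ^ (p / 2) := by
      rw [← Real.rpow_natCast a 2, ← Real.rpow_mul h.le]
      congr 1
      ring
    have e1 : a ^ p * (1 + (p - 1) * t ^ 2) ^ (p / 2) = (a ^ 2 + (p - 1) * b ^ 2) ^ (p / 2) := by
      rw [e0, ← Real.mul_rpow (by positivity) (by nlinarith)]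
      congr 1
      rw [htdef]; field_simp
    have e2 : a ^ p * (1 + t) ^ p = (a + b) ^ p := by
      rw [← Real.mul_rpow h.le (by linarith)]
      congr 1
      rw [htdef]; field_simp
    have e3 : a ^ p * (1 - t) ^ p = (a - b) ^ p := by
      rw [← Real.mul_rpow h.le (by simp only [htdef]; rw [sub_nonneg, div_le_one h]; exact hba)]
      congr 1
      rw [htdef]; field_simp
    calc (a ^ 2 + (p - 1) * b ^ 2) ^ (p / 2) = a ^ p * (1 + (p - 1) * t ^ 2) ^ (p / 2) := e1.symm
      _ ≤ a ^ p * (((1 + t) ^ p + (1 - t) ^ p) / 2) := key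
      _ = ((a + b) ^ p + (a - b) ^ p) / 2 := by rw [← e2, ← e3]; ring

theorem scalar_full {p : ℝ} (hp1 : 1 < p) (hp2 : p ≤ 2) (a b : ℝ) :
    (a ^ 2 + (p - 1) * b ^ 2) ^ (p / 2) ≤ (|a + b| ^ p + |a - b| ^ p) / 2 := by
  have habs : |a + b| ^ p + |a - b| ^ p = (|a| + |b|) ^ p + |(|a| - |b|)| ^ p := by
    rcases le_total 0 a with ha | ha <;> rcases le_total 0 b with hb | hb
    · rw [abs_of_nonneg ha, abs_of_nonneg hb, abs_of_nonneg (show 0 ≤ a + b by linarith)]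
    · rw [abs_of_nonneg ha, abs_of_nonpos hb]
      rw [show a + -b = a - b by ring, show a - -b = a + b by ring,
        abs_of_nonneg (show 0 ≤ a - b by linarith)]
      ring
    · rw [abs_of_nonpos ha, abs_of_nonneg hb,
        abs_of_nonpos (show a - b ≤ 0 by linarith)]
      rw [show -a + b = -(a - b) by ring, show -a - b = -(a + b) by ring, abs_neg]
      exact add_comm _ _
    · rw [abs_of_nonpos ha, abs_of_nonpos hb,
        abs_of_nonpos (show a + b ≤ 0 by linarith)]
      rw [show -a + -b = -(a + b) by ring, show -a - -b = -(a - b) by ring, abs_neg]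
  rw [habs]
  rcases le_total (|b|) (|a|) with hab | hab
  · have hmain := scalar_ord hp1 hp2 (abs_nonneg b) hab
    rw [abs_of_nonneg (by linarith : (0:ℝ) ≤ |a| - |b|)]
    calc (a ^ 2 + (p - 1) * b ^ 2) ^ (p / 2)
        = (|a| ^ 2 + (p - 1) * |b| ^ 2) ^ (p / 2) := by rw [sq_abs, sq_abs]
      _ ≤ _ := hmain
  · have hmain := scalar_ord hp1 hp2 (abs_nonneg a) hab
    rw [abs_of_nonpos (by linarith : |a| - |b| ≤ 0)]
    have ha2b2 : a ^ 2 ≤ b ^ 2 := by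
      rw [← sq_abs a, ← sq_abs b]
      exact pow_le_pow_left₀ (abs_nonneg a) hab 2
    have hle : a ^ 2 + (p - 1) * b ^ 2 ≤ |b| ^ 2 + (p - 1) * |a| ^ 2 := by
      rw [sq_abs, sq_abs]; nlinarith
    calc (a ^ 2 + (p - 1) * b ^ 2) ^ (p / 2)
        ≤ (|b| ^ 2 + (p - 1) * |a| ^ 2) ^ (p / 2) :=
          Real.rpow_le_rpow (by nlinarith [sq_nonneg a, sq_nonneg b]) hle (by positivity)
      _ ≤ ((|b| + |a|) ^ p + (|b| - |a|) ^ p) / 2 := hmain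
      _ = ((|a| + |b|) ^ p + (-(|a| - |b|)) ^ p) / 2 := by
          rw [add_comm (|b|) (|a|), show |b| - |a| = -(|a| - |b|) by ring]

theorem rev_minkowski {q : ℝ} (hq0 : 0 < q) (hq1 : q ≤ 1) {d : ℕ} (x y : Fin d → ℝ)
    (hx : ∀ i, 0 ≤ x i) (hy : ∀ i, 0 ≤ y i) :
    (∑ i, x i ^ q) ^ (1 / q) + (∑ i, y i ^ q) ^ (1 / q)
      ≤ (∑ i, (x i + y i) ^ q) ^ (1 / q) := by
  set Sx := ∑ i, x i ^ q with hSxd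
  set Sy := ∑ i, y i ^ q with hSyd
  have hSx : 0 ≤ Sx := Finset.sum_nonneg fun i _ => Real.rpow_nonneg (hx i) q
  have hSy : 0 ≤ Sy := Finset.sum_nonneg fun i _ => Real.rpow_nonneg (hy i) q
  set A := Sx ^ (1 / q) with hAd
  set B := Sy ^ (1 / q) with hBd
  have hA : 0 ≤ A := Real.rpow_nonneg hSx _
  have hB : 0 ≤ B := Real.rpow_nonneg hSy _
  have hAq : A ^ q = Sx := by
    rw [hAd, ← Real.rpow_mul hSx, one_div, inv_mul_cancel₀ hq0.ne', Real.rpow_one]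
  have hBq : B ^ q = Sy := by
    rw [hBd, ← Real.rpow_mul hSy, one_div, inv_mul_cancel₀ hq0.ne', Real.rpow_one]
  -- zero cases
  have hzero : ∀ z : Fin d → ℝ, (∀ i, 0 ≤ z i) → (∑ i, z i ^ q) = 0 → ∀ i, z i = 0 := by
    intro z hz hsum i
    have h0 : ∀ j ∈ Finset.univ, (0:ℝ) ≤ z j ^ q := fun j _ => Real.rpow_nonneg (hz j) q
    have := (Finset.sum_eq_zero_iff_of_nonneg h0).1 hsum i (Finset.mem_univ i)
    by_contra hne
    have hpos : 0 < z i := lt_of_le_of_ne (hz i) (Ne.symm hne)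
    exact absurd this (ne_of_gt (Real.rpow_pos_of_pos hpos q))
  rcases eq_or_lt_of_le hA with hA0 | hApos
  · -- A = 0 hence Sx = 0 hence all x i = 0
    have hSx0 : Sx = 0 := by
      by_contra hne
      have : 0 < Sx := lt_of_le_of_ne hSx (Ne.symm hne)
      exact absurd hA0.symm (ne_of_gt (Real.rpow_pos_of_pos this _))
    have hx0 := hzero x hx hSx0
    rw [← hA0]
    have : ∀ i, (x i + y i) ^ q = y i ^ q := fun i => by rw [hx0 i, zero_add]
    simp only [this]
    rw [zero_add]
  · rcases eq_or_lt_of_le hB with hB0 | hBpos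
    · have hSy0 : Sy = 0 := by
        by_contra hne
        have : 0 < Sy := lt_of_le_of_ne hSy (Ne.symm hne)
        exact absurd hB0.symm (ne_of_gt (Real.rpow_pos_of_pos this _))
      have hy0 := hzero y hy hSy0
      rw [← hB0]
      have : ∀ i, (x i + y i) ^ q = x i ^ q := fun i => by rw [hy0 i, add_zero]
      simp only [this]
      rw [add_zero]
    · -- main case
      have hAB : (0:ℝ) < A + B := by linarith
      set lam := A / (A + B) with hlamd
      have hlam0 : 0 ≤ lam := div_nonneg hApos.le hAB.le
      have hlam1 : 0 ≤ 1 - lam := by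
        rw [hlamd, sub_nonneg, div_le_one hAB]; linarith
      have hlamsum : lam + (1 - lam) = 1 := by ring
      have hpt : ∀ i, (A + B) ^ q * (lam * (x i / A) ^ q + (1 - lam) * (y i / B) ^ q)
          ≤ (x i + y i) ^ q := by
        intro i
        have hconc := (Real.concaveOn_rpow hq0.le hq1).2 (mem_Ici.2 (div_nonneg (hx i) hA))
          (mem_Ici.2 (div_nonneg (hy i) hB)) hlam0 hlam1 hlamsum
        simp only [smul_eq_mul] at hconc
        have he : lam * (x i / A) + (1 - lam) * (y i / B) = (x i + y i) / (A + B) := by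
          have h1lam : 1 - lam = B / (A + B) := by
            rw [hlamd]; field_simp; ring
          rw [hlamd, h1lam]
          field_simp
        rw [he] at hconc
        calc (A + B) ^ q * (lam * (x i / A) ^ q + (1 - lam) * (y i / B) ^ q)
            ≤ (A + B) ^ q * ((x i + y i) / (A + B)) ^ q :=
              mul_le_mul_of_nonneg_left hconc (Real.rpow_nonneg hAB.le q)
          _ = (x i + y i) ^ q := by
              rw [← Real.mul_rpow hAB.le (div_nonneg (add_nonneg (hx i) (hy i)) hAB.le),
                mul_div_cancel₀ _ hAB.ne']
      have h1 : ∑ i, (x i / A) ^ q = 1 := by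
        have : ∀ i, (x i / A) ^ q = x i ^ q / A ^ q := fun i =>
          Real.div_rpow (hx i) hA q
        simp only [this]
        rw [← Finset.sum_div, ← hSxd, hAq, div_self]
        rw [← hAq]
        exact (Real.rpow_pos_of_pos hApos q).ne'
      have h2 : ∑ i, (y i / B) ^ q = 1 := by
        have : ∀ i, (y i / B) ^ q = y i ^ q / B ^ q := fun i =>
          Real.div_rpow (hy i) hB q
        simp only [this]
        rw [← Finset.sum_div, ← hSyd, hBq, div_self]
        rw [← hBq]
        exact (Real.rpow_pos_of_pos hBpos q).ne'
      have hsum2 : (A + B) ^ q ≤ ∑ i, (x i + y i) ^ q := by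
        have hle := Finset.sum_le_sum (fun i (_ : i ∈ Finset.univ) => hpt i)
        have lhs_eq : ∑ i, (A + B) ^ q * (lam * (x i / A) ^ q + (1 - lam) * (y i / B) ^ q)
            = (A + B) ^ q := by
          rw [← Finset.mul_sum]
          rw [Finset.sum_add_distrib, ← Finset.mul_sum, ← Finset.mul_sum, h1, h2]
          ring
        rwa [lhs_eq] at hle
      calc A + B = ((A + B) ^ q) ^ (1 / q) := by
            rw [← Real.rpow_mul hAB.le, mul_one_div, div_self hq0.ne', Real.rpow_one]
        _ ≤ (∑ i, (x i + y i) ^ q) ^ (1 / q) :=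
            Real.rpow_le_rpow (Real.rpow_nonneg hAB.le q) hsum2 (by positivity)

noncomputable def Spow (p : ℝ) {d : ℕ} (x : Fin d → ℝ) : ℝ := ∑ i, |x i| ^ p

theorem Spow_nonneg (p : ℝ) {d : ℕ} (x : Fin d → ℝ) : 0 ≤ Spow p x :=
  Finset.sum_nonneg fun _ _ => Real.rpow_nonneg (abs_nonneg _) _

theorem bcl {p : ℝ} (hp1 : 1 < p) (hp2 : p ≤ 2) {d : ℕ} (u v : Fin d → ℝ) :
    Spow p u ^ (2 / p) + (p - 1) * Spow p v ^ (2 / p)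
      ≤ (Spow p (u + v) ^ (2 / p) + Spow p (u - v) ^ (2 / p)) / 2 := by
  have hp0 : (0:ℝ) < p := by linarith
  have hq0 : (0:ℝ) < p / 2 := by linarith
  have hq1 : p / 2 ≤ 1 := by linarith
  have h2p : (0:ℝ) ≤ 2 / p := by positivity
  have e1 : ∀ z : ℝ, (z ^ 2) ^ (p / 2) = |z| ^ p := by
    intro z
    rw [← sq_abs z, ← Real.rpow_natCast |z| 2, ← Real.rpow_mul (abs_nonneg z)]
    congr 1
    push_cast
    ring
  have step1 : ∑ i, ((u i) ^ 2 + (p - 1) * (v i) ^ 2) ^ (p / 2)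
      ≤ (Spow p (u + v) + Spow p (u - v)) / 2 := by
    have hsum := Finset.sum_le_sum
      (fun i (_ : i ∈ Finset.univ) => scalar_full hp1 hp2 (u i) (v i))
    calc ∑ i, ((u i) ^ 2 + (p - 1) * (v i) ^ 2) ^ (p / 2)
        ≤ ∑ i, (|u i + v i| ^ p + |u i - v i| ^ p) / 2 := hsum
      _ = (Spow p (u + v) + Spow p (u - v)) / 2 := by
          simp only [Spow, Pi.add_apply, Pi.sub_apply, ← Finset.sum_div,
            Finset.sum_add_distrib]
  have step2 : Spow p u ^ (2 / p) + (p - 1) * Spow p v ^ (2 / p)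
      ≤ (∑ i, ((u i) ^ 2 + (p - 1) * (v i) ^ 2) ^ (p / 2)) ^ (2 / p) := by
    have hrm := rev_minkowski hq0 hq1 (fun i => (u i) ^ 2) (fun i => (p - 1) * (v i) ^ 2)
      (fun i => sq_nonneg _) (fun i => mul_nonneg (by linarith) (sq_nonneg _))
    have einv : (1:ℝ) / (p / 2) = 2 / p := one_div_div p 2
    have eA : (∑ i, ((u i) ^ 2) ^ (p / 2)) = Spow p u := by
      simp only [e1]; rfl
    have eB : (∑ i, ((p - 1) * (v i) ^ 2) ^ (p / 2)) = (p - 1) ^ (p / 2) * Spow p v := by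
      have h : ∀ z : ℝ, ((p - 1) * z ^ 2) ^ (p / 2) = (p - 1) ^ (p / 2) * |z| ^ p := fun z => by
        rw [Real.mul_rpow (by linarith) (sq_nonneg z), e1]
      simp only [h]
      rw [← Finset.mul_sum]
      rfl
    have eC : ((p - 1) ^ (p / 2) * Spow p v) ^ (2 / p) = (p - 1) * Spow p v ^ (2 / p) := by
      rw [Real.mul_rpow (Real.rpow_nonneg (by linarith) _) (Spow_nonneg p v),
        ← Real.rpow_mul (show (0:ℝ) ≤ p - 1 by linarith),
        show p / 2 * (2 / p) = 1 by field_simp, Real.rpow_one]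
    rw [einv, eA, eB, eC] at hrm
    exact hrm
  have step3 : (∑ i, ((u i) ^ 2 + (p - 1) * (v i) ^ 2) ^ (p / 2)) ^ (2 / p)
      ≤ ((Spow p (u + v) + Spow p (u - v)) / 2) ^ (2 / p) :=
    Real.rpow_le_rpow (Finset.sum_nonneg fun i _ => Real.rpow_nonneg
      (add_nonneg (sq_nonneg _) (mul_nonneg (by linarith) (sq_nonneg _))) _) step1 h2p
  have step4 : ((Spow p (u + v) + Spow p (u - v)) / 2) ^ (2 / p)
      ≤ (Spow p (u + v) ^ (2 / p) + Spow p (u - v) ^ (2 / p)) / 2 := by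
    have h1le : (1:ℝ) ≤ 2 / p := by rw [le_div_iff₀ hp0]; linarith
    have hconv := Real.rpow_arith_mean_le_arith_mean_rpow (Finset.univ : Finset (Fin 2))
      ![1/2, 1/2] ![Spow p (u + v), Spow p (u - v)]
      (by intro i _; fin_cases i <;> norm_num)
      (by simp [Fin.sum_univ_two]; norm_num)
      (by intro i _; fin_cases i <;> simp [Spow_nonneg]) h1le
    simp only [Fin.sum_univ_two] at hconv
    have el : (Spow p (u + v) + Spow p (u - v)) / 2
        = ![(1:ℝ)/2, 1/2] 0 * ![Spow p (u + v), Spow p (u - v)] 0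
          + ![(1:ℝ)/2, 1/2] 1 * ![Spow p (u + v), Spow p (u - v)] 1 := by
      simp; ring
    rw [el]
    refine hconv.trans_eq ?_
    simp; ring
  calc Spow p u ^ (2 / p) + (p - 1) * Spow p v ^ (2 / p)
      ≤ _ := step2
    _ ≤ _ := step3
    _ ≤ _ := step4

theorem midpoint_convex_combo {f : ℝ → ℝ} (hc : Continuous f)
    (hm : ∀ s t : ℝ, f ((s + t) / 2) ≤ (f s + f t) / 2)
    {α : ℝ} (h0 : 0 ≤ α) (h1 : α ≤ 1) (x y : ℝ) :
    f (α * x + (1 - α) * y) ≤ α * f x + (1 - α) * f y := by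
  set g : ℝ → ℝ := fun a => a * f x + (1 - a) * f y - f (a * x + (1 - a) * y) with hg
  have hgc : Continuous g := by
    apply Continuous.sub
    · exact (continuous_id.mul continuous_const).add
        ((continuous_const.sub continuous_id).mul continuous_const)
    · exact hc.comp ((continuous_id.mul continuous_const).add
        ((continuous_const.sub continuous_id).mul continuous_const))
  have hgm : ∀ s t : ℝ, (g s + g t) / 2 ≤ g ((s + t) / 2) := by
    intro s t
    have hmid := hm (s * x + (1 - s) * y) (t * x + (1 - t) * y)
    have he : (s * x + (1 - s) * y + (t * x + (1 - t) * y)) / 2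
        = (s + t) / 2 * x + (1 - (s + t) / 2) * y := by ring
    rw [he] at hmid
    simp only [hg]
    linarith
  have g0 : g 0 = 0 := by norm_num [hg]
  have g1 : g 1 = 0 := by norm_num [hg]
  have hdy : ∀ n : ℕ, ∀ k : ℕ, k ≤ 2 ^ n → 0 ≤ g ((k : ℝ) / 2 ^ n) := by
    intro n
    induction n with
    | zero =>
      intro k hk
      interval_cases k
      · simpa using g0.ge
      · simpa using g1.ge
    | succ n ih =>
      intro k hk
      rcases Nat.even_or_odd k with ⟨m, hm'⟩ | ⟨m, hm'⟩
      · subst hm'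
        have hm2 : m ≤ 2 ^ n := by
          have : 2 ^ (n + 1) = 2 * 2 ^ n := by ring
          omega
        have he : ((m + m : ℕ) : ℝ) / 2 ^ (n + 1) = (m : ℝ) / 2 ^ n := by
          push_cast
          field_simp
          ring
        rw [he]
        exact ih m hm2
      · subst hm'
        have hm1 : m ≤ 2 ^ n := by
          have : 2 ^ (n + 1) = 2 * 2 ^ n := by ring
          omega
        have hm2 : m + 1 ≤ 2 ^ n := by
          have : 2 ^ (n + 1) = 2 * 2 ^ n := by ring
          omega
        have key := hgm ((m : ℝ) / 2 ^ n) (((m + 1 : ℕ) : ℝ) / 2 ^ n)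
        have he : ((m : ℝ) / 2 ^ n + ((m + 1 : ℕ) : ℝ) / 2 ^ n) / 2
            = ((2 * m + 1 : ℕ) : ℝ) / 2 ^ (n + 1) := by
          push_cast
          field_simp
          ring
        rw [he] at key
        have i1 := ih m hm1
        have i2 := ih (m + 1) hm2
        linarith
  have hlim : Tendsto (fun n : ℕ => (⌊α * (2:ℝ) ^ n⌋₊ : ℝ) / 2 ^ n) atTop (𝓝 α) :=
    (tendsto_nat_floor_mul_div_atTop h0).comp
      (tendsto_pow_atTop_atTop_of_one_lt one_lt_two)
  have hge : ∀ n : ℕ, 0 ≤ g ((⌊α * (2:ℝ) ^ n⌋₊ : ℝ) / 2 ^ n) := by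
    intro n
    apply hdy n
    have hle : α * (2:ℝ) ^ n ≤ ((2 ^ n : ℕ) : ℝ) := by
      push_cast
      nlinarith [pow_pos (show (0:ℝ) < 2 by norm_num) n]
    calc ⌊α * (2:ℝ) ^ n⌋₊ ≤ ⌊((2 ^ n : ℕ) : ℝ)⌋₊ := Nat.floor_mono hle
      _ = 2 ^ n := Nat.floor_natCast _
  have hfinal : 0 ≤ g α := ge_of_tendsto ((hgc.tendsto α).comp hlim)
    (Eventually.of_forall hge)
  simp only [hg] at hfinal
  linarith

end BCLaux

open Real Set Filter Topology BCLaux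

/-- **2-uniform convexity of `ψ_r(w) = (1/(2(r−1)))‖w‖_r²` for `r ∈ (1,2]`** w.r.t. the
ℓ_r norm on ℝ^d. -/
theorem stmt2 {d : ℕ} (r : ℝ) (hr1 : 1 < r) (hr2 : r ≤ 2)
    (w w' : Fin d → ℝ) (α : ℝ) (hα0 : 0 ≤ α) (hα1 : α ≤ 1) :
    1 / (2 * (r - 1)) * lpNorm r (α • w + (1 - α) • w') ^ 2 ≤
      α * (1 / (2 * (r - 1)) * lpNorm r w ^ 2)
        + (1 - α) * (1 / (2 * (r - 1)) * lpNorm r w' ^ 2)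
        - α * (1 - α) / 2 * lpNorm r (w - w') ^ 2 := by
  have hr0 : (0:ℝ) < r := by linarith
  -- the squared norm as a rpow of Spow
  have lp_sq : ∀ x : Fin d → ℝ, lpNorm r x ^ 2 = Spow r x ^ (2 / r) := by
    intro x
    rw [lpNorm, show (∑ i, |x i| ^ r) = Spow r x from rfl,
      ← Real.rpow_natCast (Spow r x ^ (1/r)) 2, ← Real.rpow_mul (Spow_nonneg r x)]
    congr 1
    push_cast
    ring
  set N : (Fin d → ℝ) → ℝ := fun x => Spow r x ^ (2 / r) with hN
  have hNnonneg : ∀ x, 0 ≤ N x := fun x => Real.rpow_nonneg (Spow_nonneg r x) _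
  -- homogeneity
  have hSpow_smul : ∀ (c : ℝ) (z : Fin d → ℝ), Spow r (c • z) = |c| ^ r * Spow r z := by
    intro c z
    rw [Spow, Spow, Finset.mul_sum]
    congr 1
    funext i
    rw [Pi.smul_apply, smul_eq_mul, abs_mul, Real.mul_rpow (abs_nonneg c) (abs_nonneg (z i))]
  have hN_smul : ∀ (c : ℝ) (z : Fin d → ℝ), N (c • z) = c ^ 2 * N z := by
    intro c z
    rw [hN]
    simp only
    rw [hSpow_smul, Real.mul_rpow (Real.rpow_nonneg (abs_nonneg c) r) (Spow_nonneg r z),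
      ← Real.rpow_mul (abs_nonneg c), show r * (2 / r) = 2 by field_simp,
      show ((2:ℝ) = ((2:ℕ):ℝ)) by norm_num, Real.rpow_natCast, sq_abs]
  set z : Fin d → ℝ := w - w' with hz
  set G : ℝ → ℝ := fun t => N (w' + t • z) - (r - 1) * t ^ 2 * N z with hG
  -- continuity of G
  have hGcont : Continuous G := by
    have hSc : Continuous fun t : ℝ => Spow r (w' + t • z) := by
      apply continuous_finset_sum
      intro i _
      have : Continuous fun t : ℝ => |w' i + t * z i| :=
        (continuous_const.add (continuous_id.mul continuous_const)).abs
      exact this.rpow_const fun _ => Or.inr hr0.le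
    have hNc : Continuous fun t : ℝ => N (w' + t • z) := by
      apply hSc.rpow_const
      intro _
      right
      positivity
    exact hNc.sub ((continuous_const.mul (continuous_pow 2)).mul continuous_const)
  -- midpoint convexity of G
  have hGmid : ∀ s t : ℝ, G ((s + t) / 2) ≤ (G s + G t) / 2 := by
    intro s t
    have hb := bcl hr1 hr2 (w' + ((s + t) / 2) • z) (((s - t) / 2) • z)
    have e1 : (w' + ((s + t) / 2) • z) + ((s - t) / 2) • z = w' + s • z := by
      funext i
      simp only [Pi.add_apply, Pi.smul_apply, smul_eq_mul]
      ring
    have e2 : (w' + ((s + t) / 2) • z) - ((s - t) / 2) • z = w' + t • z := by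
      funext i
      simp only [Pi.add_apply, Pi.sub_apply, Pi.smul_apply, smul_eq_mul]
      ring
    rw [e1, e2] at hb
    have hb' : N (w' + ((s + t) / 2) • z) + (r - 1) * (((s - t) / 2) ^ 2 * N z)
        ≤ (N (w' + s • z) + N (w' + t • z)) / 2 := by
      have := hN_smul ((s - t) / 2) z
      simp only [hN] at this hb ⊢
      rw [← this]
      exact hb
    simp only [hG]
    have hNz := hNnonneg z
    nlinarith [hb']
  -- apply convexity
  have hcombo := midpoint_convex_combo hGcont hGmid hα0 hα1 1 0
  rw [show α * 1 + (1 - α) * 0 = α by ring] at hcombo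
  have eG1 : G 1 = N w - (r - 1) * N z := by
    simp only [hG]
    rw [show w' + (1:ℝ) • z = w by funext i; simp [hz]]
    ring
  have eG0 : G 0 = N w' := by
    simp only [hG]
    rw [show w' + (0:ℝ) • z = w' by funext i; simp]
    ring
  have eGα : G α = N (α • w + (1 - α) • w') - (r - 1) * α ^ 2 * N z := by
    simp only [hG]
    rw [show w' + α • z = α • w + (1 - α) • w' by
      funext i; simp only [Pi.add_apply, Pi.smul_apply, Pi.sub_apply, smul_eq_mul, hz]; ring]
  rw [eG1, eG0, eGα] at hcombo
  -- conclude
  rw [lp_sq, lp_sq, lp_sq, lp_sq]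
  have hkey : N (α • w + (1 - α) • w')
      ≤ α * N w + (1 - α) * N w' - (r - 1) * (α * (1 - α)) * N z := by nlinarith [hcombo]
  have hcpos : (0:ℝ) ≤ 1 / (2 * (r - 1)) := div_nonneg zero_le_one (by linarith)
  have hr1' : r - 1 ≠ 0 := by linarith
  calc 1 / (2 * (r - 1)) * N (α • w + (1 - α) • w')
      ≤ 1 / (2 * (r - 1)) * (α * N w + (1 - α) * N w' - (r - 1) * (α * (1 - α)) * N z) :=
        mul_le_mul_of_nonneg_left hkey hcpos
    _ = α * (1 / (2 * (r - 1)) * N w) + (1 - α) * (1 / (2 * (r - 1)) * N w')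
        - α * (1 - α) / 2 * N z := by
        field_simp
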